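/- Let u : ℝ² → ℝ² be a continuously differentiable vector field with compact support and let c, r : ℝ² → ℝ be continuously differentiable functions. Then b(u, c, r) = −b(u, r, c). -/

import Mathlib

open MeasureTheory

/-- The divergence `div u = ∑_j ∂_j u_j` at a point `x`. -/
noncomputable def divg (u : (Fin 2 → ℝ) → (Fin 2 → ℝ)) (x : Fin 2 → ℝ) : ℝ :=
  ∑ j, fderiv ℝ u x (Pi.single j 1) j

/-- The trilinear form
`b(u, c, r) = ∫ (u·∇c) r dx + (1/2) ∫ (div u) c r dx`,
where `u·∇c = ∑_j u_j ∂_j c`. -/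
noncomputable def bform (u : (Fin 2 → ℝ) → (Fin 2 → ℝ)) (c r : (Fin 2 → ℝ) → ℝ) : ℝ :=
  (∫ x, fderiv ℝ c x (u x) * r x) + (1 / 2) * ∫ x, divg u x * (c x * r x)

section aux

variable {u : (Fin 2 → ℝ) → (Fin 2 → ℝ)} {c r : (Fin 2 → ℝ) → ℝ}

/-- component of u has compact support -/
lemma hcs_comp (hus : HasCompactSupport u) (j : Fin 2) :
    HasCompactSupport (fun x => u x j) :=
  hus.comp_left (g := fun w : Fin 2 → ℝ => w j) rfl

lemma hcd_comp (hu : ContDiff ℝ 1 u) (j : Fin 2) :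
    ContDiff ℝ 1 (fun x => u x j) :=
  (ContinuousLinearMap.proj j : (Fin 2 → ℝ) →L[ℝ] ℝ).contDiff.comp hu

lemma fderiv_comp_apply (hu : ContDiff ℝ 1 u) (x v : Fin 2 → ℝ) (j : Fin 2) :
    fderiv ℝ (fun y => u y j) x v = fderiv ℝ u x v j := by
  have h : fderiv ℝ u x = ContinuousLinearMap.pi fun i => fderiv ℝ (fun y => u y i) x := by
    have := fderiv_pi (𝕜 := ℝ) (φ := fun i y => u y i) (x := x)
      (fun i => ((hcd_comp hu i).differentiable one_ne_zero).differentiableAt)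
    simpa using this
  rw [h]; simp

lemma divg_eq (hu : ContDiff ℝ 1 u) (x : Fin 2 → ℝ) :
    divg u x = ∑ j, fderiv ℝ (fun y => u y j) x (Pi.single j 1) := by
  unfold divg
  exact Finset.sum_congr rfl fun j _ => (fderiv_comp_apply hu x _ j).symm

lemma grad_apply (hc : ContDiff ℝ 1 c) (x : Fin 2 → ℝ) (w : Fin 2 → ℝ) :
    fderiv ℝ c x w = ∑ j, w j * fderiv ℝ c x (Pi.single j 1) := by
  have hw : w = ∑ j, w j • (Pi.single j 1 : Fin 2 → ℝ) := by
    ext i; simp [Pi.single_apply, Finset.sum_ite_eq' (Finset.univ : Finset (Fin 2)) i]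
  conv_lhs => rw [hw]
  rw [map_sum]
  exact Finset.sum_congr rfl fun j _ => by rw [ContinuousLinearMap.map_smul]; simp [smul_eq_mul]

end aux

/-- Antisymmetry property (2.14) for the concentration transport term:
`b(u, c, r) = -b(u, r, c)`. -/
theorem bform_antisymm
    (u : (Fin 2 → ℝ) → (Fin 2 → ℝ)) (c r : (Fin 2 → ℝ) → ℝ)
    (hu : ContDiff ℝ 1 u) (hus : HasCompactSupport u)
    (hc : ContDiff ℝ 1 c) (hr : ContDiff ℝ 1 r) :
    bform u c r = -bform u r c := by
  -- notation
  set g : (Fin 2 → ℝ) → ℝ := fun x => c x * r x with hg_def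
  have hg : ContDiff ℝ 1 g := hc.mul hr
  have hcont_dg : ∀ v, Continuous (fun x => fderiv ℝ g x v) := fun v =>
    (hg.continuous_fderiv one_ne_zero).clm_apply continuous_const
  have hcont_dc : ∀ v, Continuous (fun x => fderiv ℝ c x v) := fun v =>
    (hc.continuous_fderiv one_ne_zero).clm_apply continuous_const
  have hcont_dr : ∀ v, Continuous (fun x => fderiv ℝ r x v) := fun v =>
    (hr.continuous_fderiv one_ne_zero).clm_apply continuous_const
  have hcont_uj : ∀ j : Fin 2, Continuous (fun x => u x j) := fun j =>
    (continuous_apply j).comp hu.continuous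
  have hcont_duj : ∀ (j : Fin 2) v, Continuous (fun x => fderiv ℝ (fun y => u y j) x v) :=
    fun j v => ((hcd_comp hu j).continuous_fderiv one_ne_zero).clm_apply continuous_const
  -- compact supports
  have hcs_uj : ∀ j : Fin 2, HasCompactSupport (fun x => u x j) := hcs_comp hus
  have hcs_duj : ∀ (j : Fin 2) v, HasCompactSupport (fun x => fderiv ℝ (fun y => u y j) x v) :=
    fun j v => ((hcs_uj j).fderiv ℝ).comp_left
      (g := fun L : (Fin 2 → ℝ) →L[ℝ] ℝ => L v) rfl
  -- integrability of all needed integrands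
  have hint1 : ∀ (j : Fin 2) (φ : (Fin 2 → ℝ) → ℝ), Continuous φ →
      Integrable (fun x => u x j * φ x) := by
    intro j φ hφ
    exact (((hcont_uj j).mul hφ)).integrable_of_hasCompactSupport ((hcs_uj j).mul_right)
  have hint2 : ∀ (j : Fin 2) (v : Fin 2 → ℝ) (φ : (Fin 2 → ℝ) → ℝ), Continuous φ →
      Integrable (fun x => fderiv ℝ (fun y => u y j) x v * φ x) := by
    intro j v φ hφ
    exact ((hcont_duj j v).mul hφ).integrable_of_hasCompactSupport ((hcs_duj j v).mul_right)
  -- per-coordinate integration by parts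
  have key : ∀ j : Fin 2,
      ∫ x, u x j * fderiv ℝ g x (Pi.single j 1)
        = - ∫ x, fderiv ℝ (fun y => u y j) x (Pi.single j 1) * g x := by
    intro j
    exact integral_mul_fderiv_eq_neg_fderiv_mul_of_integrable
      (hint2 j _ _ hg.continuous) (hint1 j _ (hcont_dg _)) (hint1 j _ hg.continuous)
      (fun x _ => (hcd_comp hu j).differentiable one_ne_zero x) (fun x _ => hg.differentiable one_ne_zero x)
  -- fderiv of product
  have hdg : ∀ x v, fderiv ℝ g x v = fderiv ℝ c x v * r x + c x * fderiv ℝ r x v := by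
    intro x v
    have := fderiv_fun_mul (𝕜 := ℝ) (hc.differentiable one_ne_zero x) (hr.differentiable one_ne_zero x)
    calc fderiv ℝ g x v = (c x • fderiv ℝ r x + r x • fderiv ℝ c x) v := by rw [hg_def, this]
      _ = _ := by simp [smul_eq_mul]; ring
  -- expand each integral into coordinate sums
  have expand : ∀ (a b : (Fin 2 → ℝ) → ℝ), ContDiff ℝ 1 a → ContDiff ℝ 1 b →
      ∫ x, fderiv ℝ a x (u x) * b x
        = ∑ j, ∫ x, u x j * (fderiv ℝ a x (Pi.single j 1) * b x) := by
    intro a b ha hb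
    rw [← integral_finset_sum]
    · congr 1; ext x
      rw [grad_apply ha x (u x), Finset.sum_mul]
      exact Finset.sum_congr rfl fun j _ => by ring
    · intro j _
      exact hint1 j _ (((ha.continuous_fderiv one_ne_zero).clm_apply continuous_const).mul
        hb.continuous)
  have expand_div :
      ∫ x, divg u x * (c x * r x)
        = ∑ j, ∫ x, fderiv ℝ (fun y => u y j) x (Pi.single j 1) * g x := by
    rw [← integral_finset_sum]
    · congr 1; ext x
      rw [divg_eq hu x, Finset.sum_mul]
    · intro j _
      exact hint2 j _ _ hg.continuous
  -- combine
  have main : ∀ j : Fin 2,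
      (∫ x, u x j * (fderiv ℝ c x (Pi.single j 1) * r x))
        + (∫ x, u x j * (fderiv ℝ r x (Pi.single j 1) * c x))
        + ∫ x, fderiv ℝ (fun y => u y j) x (Pi.single j 1) * g x = 0 := by
    intro j
    have hsum : (∫ x, u x j * (fderiv ℝ c x (Pi.single j 1) * r x))
        + (∫ x, u x j * (fderiv ℝ r x (Pi.single j 1) * c x))
        = ∫ x, u x j * fderiv ℝ g x (Pi.single j 1) := by
      rw [← integral_add (hint1 j (fun x => fderiv ℝ c x (Pi.single j 1) * r x) ((hcont_dc _).mul hr.continuous))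
        (hint1 j (fun x => fderiv ℝ r x (Pi.single j 1) * c x) ((hcont_dr _).mul hc.continuous))]
      congr 1; ext x
      rw [hdg x (Pi.single j 1)]; ring
    rw [hsum, key j]; ring
  have total : bform u c r + bform u r c = 0 := by
    unfold bform
    rw [expand c r hc hr, expand r c hr hc, expand_div,
      show (∫ x, divg u x * (r x * c x)) = ∫ x, divg u x * (c x * r x) by
        congr 1; ext x; ring,
      expand_div]
    have := Finset.sum_add_distrib (s := (Finset.univ : Finset (Fin 2)))
      (f := fun j => (∫ x, u x j * (fderiv ℝ c x (Pi.single j 1) * r x))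
        + (∫ x, u x j * (fderiv ℝ r x (Pi.single j 1) * c x)))
      (g := fun j => ∫ x, fderiv ℝ (fun y => u y j) x (Pi.single j 1) * g x)
    have hz : ∑ j : Fin 2, ((∫ x, u x j * (fderiv ℝ c x (Pi.single j 1) * r x))
        + (∫ x, u x j * (fderiv ℝ r x (Pi.single j 1) * c x))
        + ∫ x, fderiv ℝ (fun y => u y j) x (Pi.single j 1) * g x) = 0 :=
      Finset.sum_eq_zero fun j _ => main j
    rw [Finset.sum_add_distrib, Finset.sum_add_distrib] at hz
    linarith [hz]
  linarith [total]
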